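/- Every column-stochastic matrix A ∈ s(n) (n ≥ 2) that has a strictly positive column (i.e., there exists i with A_{ji} > 0 for all j) is divisible: A = BC for some B, C ∈ s(n) with neither B nor C a permutation matrix. -/

import Mathlib

open Matrix

def IsStochastic {n : ℕ} (A : Matrix (Fin n) (Fin n) ℝ) : Prop :=
  (∀ i j, 0 ≤ A i j) ∧ ∀ j, ∑ i, A i j = 1

def IsPermMatrix {n : ℕ} (A : Matrix (Fin n) (Fin n) ℝ) : Prop :=
  ∃ σ : Equiv.Perm (Fin n), ∀ i j, A i j = if σ j = i then 1 else 0

theorem positive_column_implies_divisible {n : ℕ} (hn : 2 ≤ n)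
    (A : Matrix (Fin n) (Fin n) ℝ) (hA : IsStochastic A)
    (hpos : ∃ i, ∀ j, 0 < A j i) :
    ∃ B C : Matrix (Fin n) (Fin n) ℝ, IsStochastic B ∧ IsStochastic C ∧
      ¬ IsPermMatrix B ∧ ¬ IsPermMatrix C ∧ A = B * C := by
  obtain ⟨hApos, hAsum⟩ := hA
  obtain ⟨i0, hi0⟩ := hpos
  have hnt : Nontrivial (Fin n) := Fin.nontrivial_iff_two_le.mpr hn
  obtain ⟨j0, hj0⟩ := exists_ne i0
  have hne : (Finset.univ : Finset (Fin n)).Nonempty := Finset.univ_nonempty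
  set m := Finset.univ.inf' hne (fun k => A k i0) with hm
  have hm0 : 0 < m := by
    rw [hm, Finset.lt_inf'_iff]; exact fun k _ => hi0 k
  have hmle : ∀ k, m ≤ A k i0 := fun k => Finset.inf'_le _ (Finset.mem_univ k)
  set δ := m / 2 with hδ
  have hδ0 : 0 < δ := by positivity
  have hle1 : ∀ k j, A k j ≤ 1 := by
    intro k j
    calc A k j ≤ ∑ i, A i j :=
          Finset.single_le_sum (fun i _ => hApos i j) (Finset.mem_univ k)
      _ = 1 := hAsum j
  have hδ1 : δ < 1 := by
    have h1 := hmle i0; have h2 := hle1 i0 i0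
    rw [hδ]; linarith
  have h1δ : 0 < 1 - δ := by linarith
  set B : Matrix (Fin n) (Fin n) ℝ :=
    fun k l => if l = i0 then (A k i0 - δ * A k j0) / (1 - δ) else A k l with hB
  set C : Matrix (Fin n) (Fin n) ℝ :=
    fun k l => if l = i0 then
        (1 - δ) * (if k = i0 then 1 else 0) + δ * (if k = j0 then 1 else 0)
      else (if k = l then (1:ℝ) else 0) with hC
  have hBi : ∀ k, B k i0 = (A k i0 - δ * A k j0) / (1 - δ) := fun k => by
    simp [hB]
  have hBo : ∀ k l, l ≠ i0 → B k l = A k l := fun k l h => by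
    simp [hB, h]
  have hCi : ∀ x, C x i0 =
      (1 - δ) * (if x = i0 then 1 else 0) + δ * (if x = j0 then 1 else 0) := fun x => by
    simp [hC]
  have hCo : ∀ x l, l ≠ i0 → C x l = if x = l then (1:ℝ) else 0 := fun x l h => by
    simp [hC, h]
  have hBpos : ∀ k, 0 < B k i0 := by
    intro k
    have h1 : δ * A k j0 < A k i0 := by
      have h2 := hle1 k j0
      have h3 := hmle k
      have h4 := hApos k j0
      nlinarith
    rw [hBi]
    exact div_pos (by linarith) h1δ
  refine ⟨B, C, ⟨?_, ?_⟩, ⟨?_, ?_⟩, ?_, ?_, ?_⟩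
  · -- B nonneg
    intro k l
    rcases eq_or_ne l i0 with h | h
    · rw [h]; exact (hBpos k).le
    · rw [hBo k l h]; exact hApos k l
  · -- B column sums
    intro l
    rcases eq_or_ne l i0 with h | h
    · rw [h]
      simp only [hBi]
      rw [← Finset.sum_div, Finset.sum_sub_distrib, ← Finset.mul_sum, hAsum, hAsum]
      field_simp
    · simp only [hBo _ _ h]; exact hAsum l
  · -- C nonneg
    intro k l
    rcases eq_or_ne l i0 with h | h
    · rw [h, hCi]
      split_ifs <;> simp <;> linarith
    · rw [hCo _ _ h]; split_ifs <;> norm_num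
  · -- C column sums
    intro l
    rcases eq_or_ne l i0 with h | h
    · rw [h]
      simp only [hCi]
      rw [Finset.sum_add_distrib, ← Finset.mul_sum, ← Finset.mul_sum]
      rw [Finset.sum_ite_eq', Finset.sum_ite_eq']
      simp
    · simp only [hCo _ _ h]
      rw [Finset.sum_ite_eq']
      simp
  · -- B not perm
    rintro ⟨σ, hσ⟩
    obtain ⟨k, hk⟩ := exists_ne (σ i0)
    have h := hσ k i0
    rw [if_neg (fun hh => hk hh.symm)] at h
    exact absurd h (ne_of_gt (hBpos k))
  · -- C not perm
    rintro ⟨σ, hσ⟩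
    have h1 := hσ i0 i0
    have h2 : C i0 i0 = 1 - δ := by
      rw [hCi, if_pos rfl, if_neg (Ne.symm hj0)]; ring
    rw [h2] at h1
    split_ifs at h1 <;> linarith
  · -- A = B * C
    ext k l
    rw [Matrix.mul_apply]
    rcases eq_or_ne l i0 with h | h
    · rw [h]
      have key : ∀ x, B k x * C x i0 =
          (1 - δ) * (if x = i0 then B k x else 0) + δ * (if x = j0 then B k x else 0) := by
        intro x; rw [hCi]; split_ifs <;> ring
      simp only [key]
      rw [Finset.sum_add_distrib, ← Finset.mul_sum, ← Finset.mul_sum,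
        Finset.sum_ite_eq', Finset.sum_ite_eq']
      simp only [Finset.mem_univ, if_pos]
      rw [hBi, hBo k j0 hj0]
      field_simp
      ring
    · simp only [hCo _ _ h, mul_ite, mul_one, mul_zero]
      rw [Finset.sum_ite_eq']
      simp only [Finset.mem_univ, if_pos]
      rw [hBo k l h]
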